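/- Let 0 < η < 1, 0 < θ ≤ 1, and let ω : (0,1] → [0,∞) be nondecreasing with ∫_0^1 ω(ρ)/ρ dρ < ∞. Define A_0 = 1 and A_m = max(ω(η^m), η^θ·A_{m−1}) for m ≥ 1. Then there is a constant C depending only on η and θ such that A_m ≤ C·η^{mθ}·∫_{η^m}^1 ω(ρ)/ρ^{1+θ} dρ + η^{mθ} for all m ≥ 1. -/

import Mathlib

open MeasureTheory Finset

set_option maxHeartbeats 1000000 in
/-- For the Dini recursion `A_0 = 1`, `A_m = max(ω(η^m), η^θ A_{m−1})`, there is a constant `C`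
depending only on `η` and `θ` such that
`A_m ≤ C η^{mθ} ∫_{η^m}^1 ω(ρ)/ρ^{1+θ} dρ + η^{mθ}` for all `m ≥ 1`. -/
theorem dini_recursion_integral_bound (η θ : ℝ)
    (hη : 0 < η) (hη1 : η < 1) (hθ : 0 < θ) (hθ1 : θ ≤ 1) :
    ∃ C > 0, ∀ (ω : ℝ → ℝ),
      (∀ r : ℝ, 0 < r → r ≤ 1 → 0 ≤ ω r) →
      (∀ r s : ℝ, 0 < r → r ≤ s → s ≤ 1 → ω r ≤ ω s) →
      IntegrableOn (fun ρ : ℝ => ω ρ / ρ) (Set.Ioc 0 1) →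
      ∀ (A : ℕ → ℝ), A 0 = 1 →
      (∀ m : ℕ, 1 ≤ m → A m = max (ω (η ^ m)) (η ^ θ * A (m - 1))) →
      ∀ m : ℕ, 1 ≤ m →
        A m ≤ C * η ^ ((m : ℝ) * θ) * (∫ ρ in Set.Ioc (η ^ m) (1 : ℝ), ω ρ / ρ ^ (1 + θ))
          + η ^ ((m : ℝ) * θ) := by
  have hηθ0 : (0:ℝ) < η ^ θ := Real.rpow_pos_of_pos hη θ
  have hηθ1 : η ^ θ < 1 := Real.rpow_lt_one hη.le hη1 hθ
  refine ⟨θ / (1 - η ^ θ), div_pos hθ (by linarith), ?_⟩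
  set C : ℝ := θ / (1 - η ^ θ) with hCdef
  have hC0 : 0 < C := div_pos hθ (by linarith)
  have hcc : C * ((1 - η ^ θ) / θ) = 1 := by
    have h1 : (1:ℝ) - η ^ θ ≠ 0 := by linarith
    rw [hCdef, div_mul_div_comm, mul_comm θ (1 - η ^ θ)]
    exact div_self (mul_ne_zero h1 hθ.ne')
  intro ω hω0 hωmono hint A hA0 hArec
  have hpow_pos : ∀ k : ℕ, (0:ℝ) < η ^ k := fun k => pow_pos hη k
  have hpow_le1 : ∀ k : ℕ, η ^ k ≤ 1 := fun k => pow_le_one₀ hη.le hη1.le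
  have hpow_step : ∀ k : ℕ, η ^ (k+1) ≤ η ^ k :=
    fun k => pow_le_pow_of_le_one hη.le hη1.le (Nat.le_succ k)
  have hω0' : ∀ k : ℕ, 0 ≤ ω (η ^ k) := fun k => hω0 _ (hpow_pos k) (hpow_le1 k)
  -- integrability of ω ρ / ρ^(1+θ) on Ioc a 1 for 0 < a
  have hg_int : ∀ a : ℝ, 0 < a →
      IntegrableOn (fun ρ => ω ρ / ρ ^ (1+θ)) (Set.Ioc a 1) := by
    intro a ha
    have h1 : IntegrableOn (fun ρ => ω ρ / ρ) (Set.Ioc a 1) :=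
      hint.mono_set (Set.Ioc_subset_Ioc_left ha.le)
    have h2 : IntegrableOn (fun ρ => ρ ^ (-θ) * (ω ρ / ρ)) (Set.Ioc a 1) := by
      refine Integrable.bdd_mul (c := a ^ (-θ)) h1 ?_ ?_
      · exact (by measurability : Measurable fun x : ℝ => x ^ (-θ)).aestronglyMeasurable
      · refine Filter.eventually_of_mem (self_mem_ae_restrict measurableSet_Ioc) ?_
        intro ρ hρ
        rw [Real.norm_eq_abs, abs_of_nonneg (Real.rpow_nonneg (ha.trans hρ.1).le _)]
        exact Real.rpow_le_rpow_of_nonpos ha hρ.1.le (by linarith)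
    refine h2.congr_fun ?_ measurableSet_Ioc
    intro ρ hρ
    have hρ0 : 0 < ρ := ha.trans hρ.1
    have hρθ : (0:ℝ) < ρ ^ θ := Real.rpow_pos_of_pos hρ0 θ
    show ρ ^ (-θ) * (ω ρ / ρ) = ω ρ / ρ ^ (1+θ)
    rw [Real.rpow_add hρ0, Real.rpow_one, Real.rpow_neg hρ0.le]
    field_simp
  -- decomposition of the integral
  have hsum_int : ∀ k : ℕ,
      ∑ i ∈ range k, ∫ ρ in Set.Ioc (η^(i+1)) (η^i), ω ρ / ρ ^ (1+θ)
        = ∫ ρ in Set.Ioc (η^k) 1, ω ρ / ρ ^ (1+θ) := by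
    intro k
    induction k with
    | zero => simp
    | succ n ih =>
      rw [Finset.sum_range_succ, ih]
      have hunion : Set.Ioc (η^(n+1)) (η^n) ∪ Set.Ioc (η^n) 1 = Set.Ioc (η^(n+1)) 1 :=
        Set.Ioc_union_Ioc_eq_Ioc (hpow_step n) (hpow_le1 n)
      rw [← hunion, setIntegral_union (Set.Ioc_disjoint_Ioc_of_le le_rfl) measurableSet_Ioc
        ((hg_int _ (hpow_pos (n+1))).mono_set (Set.Ioc_subset_Ioc_right (hpow_le1 n)))
        ((hg_int _ (hpow_pos n)).mono_set Set.Subset.rfl)]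
      ring
  -- key per-interval bound
  have hkey : ∀ i : ℕ, η ^ (-((i:ℝ)+1) * θ) * ω (η ^ (i+1))
      ≤ C * ∫ ρ in Set.Ioc (η^(i+1)) (η^i), ω ρ / ρ ^ (1+θ) := by
    intro i
    set a := η ^ (i+1) with hadef
    set b := η ^ i with hbdef
    have ha0 : 0 < a := hpow_pos (i+1)
    have hab : a ≤ b := hpow_step i
    have hb1 : b ≤ 1 := hpow_le1 i
    have hrne : -(1+θ) + 1 ≠ 0 := by intro h; exact hθ.ne' (by linarith)
    -- integrability of lower function
    have hf_int : IntegrableOn (fun ρ => ω a * ρ ^ (-(1+θ))) (Set.Ioc a b) := by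
      have := intervalIntegral.intervalIntegrable_rpow (μ := volume)
        (r := -(1+θ)) (a := a) (b := b)
        (Or.inr (by rw [Set.uIcc_of_le hab]; intro h; exact absurd h.1 (by linarith)))
      exact ((intervalIntegrable_iff_integrableOn_Ioc_of_le hab).mp this).const_mul _
    have hg_int' : IntegrableOn (fun ρ => ω ρ / ρ ^ (1+θ)) (Set.Ioc a b) :=
      (hg_int a ha0).mono_set (Set.Ioc_subset_Ioc_right hb1)
    have hmono : ∫ ρ in Set.Ioc a b, ω a * ρ ^ (-(1+θ))
        ≤ ∫ ρ in Set.Ioc a b, ω ρ / ρ ^ (1+θ) := by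
      refine setIntegral_mono_on hf_int hg_int' measurableSet_Ioc ?_
      intro ρ hρ
      have hρ0 : 0 < ρ := ha0.trans_le hρ.1.le
      rw [Real.rpow_neg hρ0.le, div_eq_mul_inv]
      exact mul_le_mul_of_nonneg_right
        (hωmono a ρ ha0 hρ.1.le (hρ.2.trans hb1))
        (inv_nonneg.mpr (Real.rpow_nonneg hρ0.le _))
    -- compute the lower integral
    have ha' : a ^ (-(1+θ) + 1) = η ^ (-((i:ℝ)+1) * θ) := by
      rw [hadef, ← Real.rpow_natCast η (i+1), ← Real.rpow_mul hη.le]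
      congr 1
      push_cast
      ring
    have hb' : b ^ (-(1+θ) + 1) = η ^ (-((i:ℝ)+1) * θ) * η ^ θ := by
      rw [hbdef, ← Real.rpow_natCast η i, ← Real.rpow_mul hη.le, ← Real.rpow_add hη]
      congr 1
      push_cast
      ring
    have hcomp : ∫ ρ in Set.Ioc a b, ω a * ρ ^ (-(1+θ))
        = ω a * (η ^ (-((i:ℝ)+1) * θ) * (1 - η ^ θ) / θ) := by
      rw [← intervalIntegral.integral_of_le hab, intervalIntegral.integral_const_mul,
        integral_rpow (Or.inr ⟨by intro h; exact hθ.ne' (by linarith), by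
          rw [Set.uIcc_of_le hab]; intro h; exact absurd h.1 (by linarith)⟩),
        ha', hb']
      have hdiv : (η ^ (-((i:ℝ)+1) * θ) * η ^ θ - η ^ (-((i:ℝ)+1) * θ)) / (-(1+θ) + 1)
          = η ^ (-((i:ℝ)+1) * θ) * (1 - η ^ θ) / θ := by
        rw [div_eq_div_iff hrne hθ.ne']
        ring
      rw [hdiv]
    rw [hcomp] at hmono
    have hmul := mul_le_mul_of_nonneg_left hmono hC0.le
    have heq : C * (ω a * (η ^ (-((i:ℝ)+1) * θ) * (1 - η ^ θ) / θ))
        = η ^ (-((i:ℝ)+1) * θ) * ω a := by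
      rw [show C * (ω a * (η ^ (-((i:ℝ)+1) * θ) * (1 - η ^ θ) / θ))
          = (C * ((1 - η ^ θ) / θ)) * (η ^ (-((i:ℝ)+1) * θ) * ω a) from by ring, hcc, one_mul]
    rw [heq] at hmul
    exact hmul
  -- main recursion bound
  have hAbound : ∀ k : ℕ, A k ≤ η ^ ((k:ℝ)*θ) *
      (1 + ∑ i ∈ range k, η ^ (-((i:ℝ)+1)*θ) * ω (η^(i+1))) := by
    intro k
    induction k with
    | zero => simp [hA0]
    | succ n ih =>
      have hsum_nonneg : 0 ≤ ∑ i ∈ range n, η ^ (-((i:ℝ)+1)*θ) * ω (η^(i+1)) :=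
        Finset.sum_nonneg fun i _ => mul_nonneg (Real.rpow_nonneg hη.le _) (hω0' (i+1))
      have hcast : ((n+1 : ℕ) : ℝ) = (n:ℝ) + 1 := by push_cast; ring
      rw [hArec (n+1) (Nat.succ_le_succ (Nat.zero_le n)), Nat.add_sub_cancel, hcast,
        Finset.sum_range_succ]
      set S := ∑ i ∈ range n, η ^ (-((i:ℝ)+1)*θ) * ω (η^(i+1)) with hSdef
      set t := η ^ (-((n:ℝ)+1)*θ) * ω (η^(n+1)) with htdef
      have ht_nonneg : 0 ≤ t := by
        rw [htdef]; exact mul_nonneg (Real.rpow_nonneg hη.le _) (hω0' (n+1))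
      have hpos1 : (0:ℝ) < η ^ (((n:ℝ)+1)*θ) := Real.rpow_pos_of_pos hη _
      have e1 : η ^ (((n:ℝ)+1)*θ) * t = ω (η^(n+1)) := by
        rw [htdef, ← mul_assoc, ← Real.rpow_add hη,
          show ((n:ℝ)+1)*θ + -((n:ℝ)+1)*θ = 0 from by ring, Real.rpow_zero, one_mul]
      have esplit : η ^ (((n:ℝ)+1)*θ) * (1 + (S + t))
          = η ^ (((n:ℝ)+1)*θ) * (1 + S) + η ^ (((n:ℝ)+1)*θ) * t := by ring
      apply max_le
      · rw [esplit, e1]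
        have h0 : 0 ≤ η ^ (((n:ℝ)+1)*θ) * (1 + S) :=
          mul_nonneg hpos1.le (by linarith)
        linarith
      · have h2 : η ^ θ * η ^ ((n:ℝ)*θ) = η ^ (((n:ℝ)+1)*θ) := by
          rw [← Real.rpow_add hη]; congr 1; ring
        have h1 := mul_le_mul_of_nonneg_left ih hηθ0.le
        rw [← mul_assoc, h2] at h1
        have h3 : η ^ (((n:ℝ)+1)*θ) * (1 + S) ≤ η ^ (((n:ℝ)+1)*θ) * (1 + (S + t)) :=
          mul_le_mul_of_nonneg_left (by linarith) hpos1.le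
        linarith
  -- conclusion
  intro m hm
  have hS : ∑ i ∈ range m, η ^ (-((i:ℝ)+1)*θ) * ω (η^(i+1))
      ≤ C * ∫ ρ in Set.Ioc (η^m) 1, ω ρ / ρ ^ (1+θ) := by
    rw [← hsum_int m, Finset.mul_sum]
    exact Finset.sum_le_sum fun i _ => hkey i
  have hpos : (0:ℝ) < η ^ ((m:ℝ)*θ) := Real.rpow_pos_of_pos hη _
  calc A m ≤ η ^ ((m:ℝ)*θ) * (1 + ∑ i ∈ range m, η ^ (-((i:ℝ)+1)*θ) * ω (η^(i+1))) :=
        hAbound m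
    _ ≤ η ^ ((m:ℝ)*θ) * (1 + C * ∫ ρ in Set.Ioc (η^m) 1, ω ρ / ρ ^ (1+θ)) :=
        mul_le_mul_of_nonneg_left (by linarith) hpos.le
    _ = C * η ^ ((m:ℝ)*θ) * (∫ ρ in Set.Ioc (η^m) 1, ω ρ / ρ ^ (1+θ)) + η ^ ((m:ℝ)*θ) := by
        ring
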